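/- arXiv:1711.06227 — 5 statements merged into one kernel-verified Lean document; each statement's English description precedes it below -/
import Mathlib

section
/- The map χ : [0,1] → [0,1] defined by χ(x) = exp(1 - x^{-1}) for x ∈ (0,1] and χ(0) = 0 is a semigroup isomorphism from ([0,1], ⊼) to ([0,1], ·), i.e., χ is bijective and χ(x ⊼ y) = χ(x)·χ(y) for all x, y ∈ [0,1]. -/
noncomputable def boolMin (x y : ℝ) : ℝ :=
  if 0 < x ∧ 0 < y then x * y / (x + y - x * y) else 0

noncomputable def chi (x : ℝ) : ℝ :=
  if 0 < x then Real.exp (1 - x⁻¹) else 0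

lemma chi_pos_eq {x : ℝ} (hx : 0 < x) : chi x = Real.exp (1 - x⁻¹) := by
  simp [chi, hx]

lemma chi_zero : chi 0 = 0 := by simp [chi]

lemma chi_mem {x : ℝ} (hx : x ∈ Set.Icc (0:ℝ) 1) : chi x ∈ Set.Icc (0:ℝ) 1 := by
  rcases hx with ⟨h0, h1⟩
  rcases eq_or_lt_of_le h0 with h | h
  · simp [chi, ← h]
  · rw [chi_pos_eq h]
    constructor
    · exact (Real.exp_pos _).le
    · have hi : (1:ℝ) ≤ x⁻¹ := one_le_inv₀ h |>.2 h1
      have : 1 - x⁻¹ ≤ 0 := by linarith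
      calc Real.exp (1 - x⁻¹) ≤ Real.exp 0 := Real.exp_le_exp.2 this
        _ = 1 := Real.exp_zero

theorem chi_semigroup_iso :
    Set.BijOn chi (Set.Icc (0:ℝ) 1) (Set.Icc (0:ℝ) 1) ∧
    ∀ x ∈ Set.Icc (0:ℝ) 1, ∀ y ∈ Set.Icc (0:ℝ) 1,
      chi (boolMin x y) = chi x * chi y := by
  constructor
  · refine ⟨fun x hx => chi_mem hx, ?_, ?_⟩
    · intro a ha b hb hab
      rcases eq_or_lt_of_le ha.1 with h | h <;> rcases eq_or_lt_of_le hb.1 with h' | h'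
      · rw [← h, ← h']
      · rw [← h, chi_zero, chi_pos_eq h'] at hab
        exact absurd hab.symm (Real.exp_pos _).ne'
      · rw [← h', chi_zero, chi_pos_eq h] at hab
        exact absurd hab (Real.exp_pos _).ne'
      · rw [chi_pos_eq h, chi_pos_eq h'] at hab
        have := Real.exp_injective hab
        have : a⁻¹ = b⁻¹ := by linarith
        exact inv_injective this
    · intro y hy
      rcases eq_or_lt_of_le hy.1 with h | h
      · exact ⟨0, ⟨le_refl 0, zero_le_one⟩, by simp [chi, ← h]⟩
      · refine ⟨(1 - Real.log y)⁻¹, ⟨?_, ?_⟩, ?_⟩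
        · have hlog : Real.log y ≤ 0 := Real.log_nonpos h.le hy.2
          exact (inv_pos.2 (by linarith)).le
        · have hlog : Real.log y ≤ 0 := Real.log_nonpos h.le hy.2
          have h1 : (1:ℝ) ≤ 1 - Real.log y := by linarith
          exact inv_le_one_of_one_le₀ h1
        · have hlog : Real.log y ≤ 0 := Real.log_nonpos h.le hy.2
          have hpos : 0 < (1 - Real.log y)⁻¹ := inv_pos.2 (by linarith)
          rw [chi_pos_eq hpos, inv_inv]
          have : 1 - (1 - Real.log y) = Real.log y := by ring
          rw [this, Real.exp_log h]
  · intro x hx y hy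
    rcases eq_or_lt_of_le hx.1 with h | h
    · simp [boolMin, ← h, chi_zero]
    rcases eq_or_lt_of_le hy.1 with h' | h'
    · simp [boolMin, ← h', chi_zero]
    · have hden : 0 < x + y - x * y := by nlinarith [hx.2, hy.2]
      have hb : boolMin x y = x * y / (x + y - x * y) := by simp [boolMin, h, h']
      have hbpos : 0 < boolMin x y := by rw [hb]; positivity
      rw [chi_pos_eq hbpos, chi_pos_eq h, chi_pos_eq h', ← Real.exp_add, hb]
      congr 1
      field_simp
      ring
end

section
/- Let p, q ∈ (0,1) and define K(z) = z((1-p)/(z-p) + (1-q)/(z-q)) and G(z) = 1/(z - K(z)). Then the limit lim_{z→0} z·G(z) exists and equals 1/(p^{-1} + q^{-1} - 1). -/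
open Filter Complex

theorem atom_at_zero_of_boolean_conv (p q : ℝ)
    (hp : p ∈ Set.Ioo (0:ℝ) 1) (hq : q ∈ Set.Ioo (0:ℝ) 1) :
    Tendsto
      (fun y : ℝ =>
        (Complex.I * y) *
          (Complex.I * y -
            (Complex.I * y) * ((1 - (p:ℂ)) / (Complex.I * y - p)
              + (1 - (q:ℂ)) / (Complex.I * y - q)))⁻¹)
      (nhdsWithin 0 (Set.Ioi 0))
      (nhds ((1 / (p⁻¹ + q⁻¹ - 1) : ℝ) : ℂ)) := by
  obtain ⟨hp0, hp1⟩ := hp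
  obtain ⟨hq0, hq1⟩ := hq
  have hpC : (p:ℂ) ≠ 0 := by exact_mod_cast hp0.ne'
  have hqC : (q:ℂ) ≠ 0 := by exact_mod_cast hq0.ne'
  set A : ℝ → ℂ := fun y => (1 - (p:ℂ)) / (Complex.I * y - p)
      + (1 - (q:ℂ)) / (Complex.I * y - q) with hA
  set L : ℂ := (1 - (p:ℂ)) / (-p) + (1 - (q:ℂ)) / (-q) with hL
  have hpR : p ≠ 0 := hp0.ne'
  have hqR : q ≠ 0 := hq0.ne'
  have hnum : (0:ℝ) < p + q - p * q := by nlinarith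
  have h1L : (1:ℂ) - L = ((p + q - p * q : ℝ) : ℂ) / ((p * q : ℝ) : ℂ) := by
    rw [hL]; push_cast; field_simp
    ring
  have hLne : (1 : ℂ) - L ≠ 0 := by
    rw [h1L]
    exact div_ne_zero (by exact_mod_cast hnum.ne') (by push_cast; exact mul_ne_zero hpC hqC)
  have hz : Tendsto (fun y : ℝ => Complex.I * (y:ℂ)) (nhdsWithin 0 (Set.Ioi 0)) (nhds 0) := by
    have : Tendsto (fun y : ℝ => Complex.I * (y:ℂ)) (nhds 0) (nhds (Complex.I * ((0:ℝ):ℂ))) :=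
      (continuous_const.mul (Complex.continuous_ofReal)).tendsto 0
    simpa using this.mono_left nhdsWithin_le_nhds
  have hAtend : Tendsto A (nhdsWithin 0 (Set.Ioi 0)) (nhds L) := by
    rw [hA, hL]
    refine Tendsto.add (Tendsto.div tendsto_const_nhds ?_ (by simpa using neg_ne_zero.mpr hpC))
      (Tendsto.div tendsto_const_nhds ?_ (by simpa using neg_ne_zero.mpr hqC))
    · simpa using hz.sub (tendsto_const_nhds (x := (p:ℂ)))
    · simpa using hz.sub (tendsto_const_nhds (x := (q:ℂ)))
  have key : Tendsto (fun y : ℝ => ((1:ℂ) - A y)⁻¹) (nhdsWithin 0 (Set.Ioi 0))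
      (nhds (((1:ℂ) - L)⁻¹)) :=
    (tendsto_const_nhds.sub hAtend).inv₀ hLne
  have hreal : (1 / (p⁻¹ + q⁻¹ - 1) : ℝ) = p * q / (p + q - p * q) := by
    have hd : p⁻¹ + q⁻¹ - 1 = (p + q - p * q) / (p * q) := by field_simp; ring
    rw [hd, one_div, inv_div]
  have hval : ((1:ℂ) - L)⁻¹ = ((1 / (p⁻¹ + q⁻¹ - 1) : ℝ) : ℂ) := by
    rw [h1L, inv_div, hreal]; push_cast; ring
  rw [hval] at key
  refine key.congr' ?_
  filter_upwards [self_mem_nhdsWithin] with y hy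
  have hzne : Complex.I * (y:ℂ) ≠ 0 :=
    mul_ne_zero Complex.I_ne_zero (by exact_mod_cast (ne_of_gt hy))
  have : Complex.I * (y:ℂ) - Complex.I * (y:ℂ) * A y = Complex.I * (y:ℂ) * (1 - A y) := by ring
  rw [hA] at this ⊢
  rw [this, mul_inv, ← mul_assoc, mul_inv_cancel₀ hzne, one_mul]
end

section
/- Let F, G : [0,∞) → [0,1] be distribution functions of nonnegative random variables (monotone nondecreasing, right-continuous, tending to 1 at ∞). Define (F ⊻ G)(t) = F(t) ⊼ G(t), where ⊼ is the Boolean min-convolution. Then F ⊻ G is again a distribution function of a nonnegative random variable. -/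
open Set Filter Topology

/-- `F` is the distribution function of a nonnegative random variable:
monotone and right-continuous on `[0,∞)`, with values in `[0,1]` tending to `1` at `∞`. -/
def IsDistFun (F : ℝ → ℝ) : Prop :=
  MonotoneOn F (Ici 0) ∧
  (∀ t ∈ Ici (0:ℝ), ContinuousWithinAt F (Ici t) t) ∧
  Tendsto F atTop (nhds 1) ∧
  (∀ t ∈ Ici (0:ℝ), F t ∈ Icc (0:ℝ) 1)

lemma denom_pos' {x y : ℝ} (hx : 0 < x) (hy : 0 < y) (hy1 : y ≤ 1) :
    0 < x + y - x * y := by nlinarith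

lemma boolMin_nonneg' {x y : ℝ} (hy1 : y ≤ 1) : 0 ≤ boolMin x y := by
  unfold boolMin
  split
  · next h => exact le_of_lt (div_pos (mul_pos h.1 h.2) (denom_pos' h.1 h.2 hy1))
  · exact le_rfl

lemma boolMin_le_left' {x y : ℝ} (hx : 0 ≤ x) (hy1 : y ≤ 1) : boolMin x y ≤ x := by
  unfold boolMin
  split
  · next h =>
    rw [div_le_iff₀ (denom_pos' h.1 h.2 hy1)]
    nlinarith [mul_nonneg (mul_pos h.1 h.1).le (sub_nonneg.2 hy1)]
  · exact hx

lemma boolMin_mono' {a b c d : ℝ} (hac : a ≤ c) (hbd : b ≤ d) (ha : 0 ≤ a) (hb : 0 ≤ b)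
    (hc1 : c ≤ 1) (hd1 : d ≤ 1) : boolMin a b ≤ boolMin c d := by
  by_cases h : 0 < a ∧ 0 < b
  · have hc : 0 < c := lt_of_lt_of_le h.1 hac
    have hd : 0 < d := lt_of_lt_of_le h.2 hbd
    unfold boolMin
    rw [if_pos h, if_pos ⟨hc, hd⟩,
      div_le_div_iff₀ (denom_pos' h.1 h.2 (hbd.trans hd1)) (denom_pos' hc hd hd1)]
    nlinarith [mul_nonneg (mul_nonneg ha hc.le) (sub_nonneg.2 hbd),
      mul_nonneg (mul_nonneg hb hd.le) (sub_nonneg.2 hac)]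
  · calc boolMin a b = 0 := by unfold boolMin; rw [if_neg h]
    _ ≤ boolMin c d := boolMin_nonneg' hd1

theorem boolean_max_conv_isDistFun (F G : ℝ → ℝ)
    (hF : IsDistFun F) (hG : IsDistFun G) :
    IsDistFun (fun t => boolMin (F t) (G t)) := by
  obtain ⟨hFm, hFc, hFt, hFb⟩ := hF
  obtain ⟨hGm, hGc, hGt, hGb⟩ := hG
  refine ⟨?_, ?_, ?_, ?_⟩
  · intro s hs t ht hst
    exact boolMin_mono' (hFm hs ht hst) (hGm hs ht hst) (hFb s hs).1 (hGb s hs).1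
      (hFb t ht).2 (hGb t ht).2
  · intro t ht
    have hsub : Ici t ⊆ Ici (0:ℝ) := fun s hs => Set.mem_Ici.2 (le_trans (Set.mem_Ici.1 ht) (Set.mem_Ici.1 hs))
    by_cases h : 0 < F t ∧ 0 < G t
    · have hcF := hFc t ht
      have hcG := hGc t ht
      have hden : ContinuousWithinAt (fun s => F s + G s - F s * G s) (Ici t) t :=
        (hcF.add hcG).sub (hcF.mul hcG)
      have hd0 : F t + G t - F t * G t ≠ 0 :=
        (denom_pos' h.1 h.2 (hGb t ht).2).ne'
      have hcont : ContinuousWithinAt (fun s => F s * G s / (F s + G s - F s * G s))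
          (Ici t) t := (hcF.mul hcG).div hden hd0
      refine hcont.congr (fun s hs => ?_) ?_
      · have h1 : 0 < F s := lt_of_lt_of_le h.1 (hFm ht (hsub hs) hs)
        have h2 : 0 < G s := lt_of_lt_of_le h.2 (hGm ht (hsub hs) hs)
        simp only [boolMin]
        exact if_pos ⟨h1, h2⟩
      · simp only [boolMin, if_pos h]
    · -- F t = 0 or G t = 0; boolMin is 0 and squeezed
      have hval : boolMin (F t) (G t) = 0 := by unfold boolMin; rw [if_neg h]
      have hnn : ∀ᶠ s in 𝓝[Ici t] t, (0:ℝ) ≤ boolMin (F s) (G s) :=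
        eventually_mem_nhdsWithin.mono (fun s hs => boolMin_nonneg' (hGb s (hsub hs)).2)
      rcases not_and_or.1 h with hF0 | hG0
      · have hF0 : F t = 0 := le_antisymm (not_lt.1 hF0) (hFb t ht).1
        have hub : ∀ᶠ s in 𝓝[Ici t] t, boolMin (F s) (G s) ≤ F s :=
          eventually_mem_nhdsWithin.mono
            (fun s hs => boolMin_le_left' (hFb s (hsub hs)).1 (hGb s (hsub hs)).2)
        have hFten : Tendsto F (𝓝[Ici t] t) (𝓝 0) := by
          have := hFc t ht
          rwa [ContinuousWithinAt, hF0] at this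
        show ContinuousWithinAt (fun s => boolMin (F s) (G s)) (Ici t) t
        rw [ContinuousWithinAt, hval]
        exact tendsto_of_tendsto_of_tendsto_of_le_of_le' tendsto_const_nhds hFten hnn hub
      · have hG0 : G t = 0 := le_antisymm (not_lt.1 hG0) (hGb t ht).1
        have hub : ∀ᶠ s in 𝓝[Ici t] t, boolMin (F s) (G s) ≤ G s :=
          eventually_mem_nhdsWithin.mono (fun s hs => by
            have h1 : 0 ≤ G s := (hGb s (hsub hs)).1
            have h2 : F s ≤ 1 := (hFb s (hsub hs)).2
            unfold boolMin
            split
            · next hc =>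
              rw [div_le_iff₀ (denom_pos' hc.1 hc.2 (hGb s (hsub hs)).2)]
              nlinarith [mul_nonneg (mul_nonneg h1 h1) (sub_nonneg.2 h2)]
            · exact h1)
        have hGten : Tendsto G (𝓝[Ici t] t) (𝓝 0) := by
          have := hGc t ht
          rwa [ContinuousWithinAt, hG0] at this
        show ContinuousWithinAt (fun s => boolMin (F s) (G s)) (Ici t) t
        rw [ContinuousWithinAt, hval]
        exact tendsto_of_tendsto_of_tendsto_of_le_of_le' tendsto_const_nhds hGten hnn hub
  · have hFev : ∀ᶠ t in atTop, (1:ℝ)/2 < F t :=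
      hFt.eventually (eventually_gt_nhds (by norm_num))
    have hGev : ∀ᶠ t in atTop, (1:ℝ)/2 < G t :=
      hGt.eventually (eventually_gt_nhds (by norm_num))
    have heq : (fun t => F t * G t / (F t + G t - F t * G t)) =ᶠ[atTop]
        (fun t => boolMin (F t) (G t)) := by
      filter_upwards [hFev, hGev] with t h1 h2
      simp only [boolMin]
      exact (if_pos ⟨by linarith, by linarith⟩).symm
    have hlim : Tendsto (fun t => F t * G t / (F t + G t - F t * G t)) atTop
        (𝓝 (1 * 1 / (1 + 1 - 1 * 1))) :=
      (hFt.mul hGt).div ((hFt.add hGt).sub (hFt.mul hGt)) (by norm_num)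
    have : Tendsto (fun t => F t * G t / (F t + G t - F t * G t)) atTop (𝓝 1) := by
      convert hlim using 2; norm_num
    exact this.congr' heq
  · intro t ht
    exact ⟨boolMin_nonneg' (hGb t ht).2,
      le_trans (boolMin_le_left' (hFb t ht).1 (hGb t ht).2) (hFb t ht).2⟩
end

section
/- For α > 0 and λ > 0, the Dagum distribution function F(t) = (1 + λ t^{-α})^{-1} is Boolean max-stable: F^{⊻ n}(n^{1/α} t) = F(t) for all n ∈ ℕ, n ≥ 1, and all t > 0, where F^{⊻ n} denotes the n-fold Boolean max-convolution of F with itself. -/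
/-- `n`-fold Boolean max-convolution of a distribution function with itself
(`nfold F 0 = 1`, the unit for pointwise `boolMin`). -/
noncomputable def nfold (F : ℝ → ℝ) : ℕ → ℝ → ℝ
  | 0 => fun _ => 1
  | n + 1 => fun t => boolMin (F t) (nfold F n t)

lemma boolMin_inv (a b : ℝ) (ha : 0 < a) (hb : 0 < b) :
    boolMin (1 + a)⁻¹ (1 + b)⁻¹ = (1 + a + b)⁻¹ := by
  have h1 : (0:ℝ) < 1 + a := by linarith
  have h2 : (0:ℝ) < 1 + b := by linarith
  have h3 : (0:ℝ) < 1 + a + b := by linarith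
  rw [boolMin, if_pos ⟨inv_pos.mpr h1, inv_pos.mpr h2⟩]
  field_simp [h3.ne']
  rw [show (1:ℝ) + b + (1 + a) - 1 = 1 + a + b from by ring, div_self h3.ne']

lemma nfold_dagum (lam α : ℝ) (hlam : 0 < lam) :
    ∀ n : ℕ, ∀ s : ℝ, 0 < s →
      nfold (fun s => (1 + lam * s ^ (-α))⁻¹) (n + 1) s
        = (1 + (n + 1 : ℝ) * (lam * s ^ (-α)))⁻¹ := by
  intro n
  induction n with
  | zero =>
    intro s hs
    have hx : 0 < lam * s ^ (-α) := mul_pos hlam (Real.rpow_pos_of_pos hs _)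
    simp only [nfold, boolMin]
    simp only [show (0 < (1 + lam * s ^ (-α))⁻¹ ∧ (0:ℝ) < 1) ↔ True from ⟨fun _ => trivial, fun _ => ⟨inv_pos.mpr (by linarith), one_pos⟩⟩, if_true]
    push_cast
    have h1 : (0:ℝ) < 1 + lam * s ^ (-α) := by linarith
    field_simp
    rw [div_eq_one_iff_eq (ne_of_gt (by linarith))]
    ring
  | succ m ih =>
    intro s hs
    have hx : 0 < lam * s ^ (-α) := mul_pos hlam (Real.rpow_pos_of_pos hs _)
    have h2 : nfold (fun s => (1 + lam * s ^ (-α))⁻¹) (m + 1 + 1) s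
        = boolMin (1 + lam * s ^ (-α))⁻¹
            (nfold (fun s => (1 + lam * s ^ (-α))⁻¹) (m + 1) s) := rfl
    rw [h2, ih s hs, boolMin_inv _ _ hx (by positivity)]
    push_cast
    ring_nf

theorem dagum_boolean_max_stable (lam α : ℝ) (hlam : 0 < lam) (hα : 0 < α) :
    ∀ n : ℕ, 1 ≤ n → ∀ t : ℝ, 0 < t →
      nfold (fun s => (1 + lam * s ^ (-α))⁻¹) n ((n : ℝ) ^ (1 / α) * t)
        = (1 + lam * t ^ (-α))⁻¹ := by
  intro n hn t ht
  obtain ⟨m, rfl⟩ := Nat.exists_eq_add_of_le hn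
  have hnpos : (0:ℝ) < ((1 + m : ℕ) : ℝ) := by positivity
  have hs : 0 < ((1 + m : ℕ) : ℝ) ^ (1 / α) * t :=
    mul_pos (Real.rpow_pos_of_pos hnpos _) ht
  rw [show (1 + m) = m + 1 by ring] at *
  rw [nfold_dagum lam α hlam m _ hs]
  have hc : (0:ℝ) < ((m + 1 : ℕ) : ℝ) := by positivity
  have key : (((m + 1 : ℕ) : ℝ) ^ (1 / α) * t) ^ (-α)
      = (((m + 1 : ℕ) : ℝ))⁻¹ * t ^ (-α) := by
    rw [Real.mul_rpow (Real.rpow_pos_of_pos hc _).le ht.le,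
      ← Real.rpow_mul hc.le, one_div,
      show α⁻¹ * -α = -1 by field_simp, Real.rpow_neg_one]
  rw [key]
  have hne : ((m:ℝ) + 1) ≠ 0 := by positivity
  push_cast
  congr 1
  field_simp
end

section
/- Let F ∈ Δ₊ with F(t) > 0 for t > 0. If there exist G ∈ Δ₊ and constants a_n > 0 such that G^{⊻ n}(a_n t) → F(t) for all t > 0, and F is the Dagum-type limit arising this way, then F(t) = (1 + λ t^{-α})^{-1} for some λ > 0, α > 0. Conversely, every such F is Boolean max-stable (take G = F and a_n = n^{-1/α}). -/
open Set Filter Topology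

open ENNReal

noncomputable def psiE (f : ℝ) : ℝ≥0∞ := (ENNReal.ofReal f)⁻¹ - 1

lemma psiE_of_pos {f : ℝ} (hf : 0 < f) : psiE f = ENNReal.ofReal (1/f - 1) := by
  unfold psiE
  rw [← ENNReal.ofReal_inv_of_pos hf]
  rw [← ENNReal.ofReal_one, ← ENNReal.ofReal_sub _ (zero_le_one)]
  norm_num

lemma psiE_of_nonpos {f : ℝ} (hf : f ≤ 0) : psiE f = ∞ := by
  unfold psiE
  rw [ENNReal.ofReal_eq_zero.2 hf]
  simp

lemma psiE_lt_top {f : ℝ} (hf : 0 < f) : psiE f < ∞ := by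
  rw [psiE_of_pos hf]; exact ENNReal.ofReal_lt_top

lemma psiE_pos {f : ℝ} (hf : f < 1) : 0 < psiE f := by
  rcases le_or_gt f 0 with h | h
  · rw [psiE_of_nonpos h]; simp
  · rw [psiE_of_pos h]
    apply ENNReal.ofReal_pos.2
    have : 1 < 1/f := by rw [lt_div_iff₀ h]; linarith
    linarith

lemma psiE_antitone {f g : ℝ} (hfg : f ≤ g) : psiE g ≤ psiE f := by
  unfold psiE
  exact tsub_le_tsub_right (ENNReal.inv_le_inv.2 (ENNReal.ofReal_le_ofReal hfg)) 1

lemma psiE_one : psiE 1 = 0 := by simp [psiE]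

lemma nfold_apply (G : ℝ → ℝ) {s : ℝ} (h1 : G s ≤ 1) (n : ℕ) :
    nfold G (n+1) s =
      if 0 < G s then G s / (G s + (n+1) * (1 - G s)) else 0 := by
  induction n with
  | zero =>
    show boolMin (G s) (nfold G 0 s) = _
    by_cases h : 0 < G s
    · simp only [h, if_pos, nfold, boolMin, h, true_and, if_pos zero_lt_one]
      rw [mul_one]
      norm_num
    · simp [nfold, boolMin, h]
  | succ n ih =>
    show boolMin (G s) (nfold G (n+1) s) = _
    by_cases h : 0 < G s
    · rw [ih, if_pos h, if_pos h]
      set g := G s with hg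
      have hD : (0:ℝ) < g + (n+1) * (1 - g) := by nlinarith
      have hy : (0:ℝ) < g / (g + (n+1) * (1-g)) := div_pos h hD
      have hy1 : g / (g + (n+1) * (1-g)) ≤ 1 := by
        rw [div_le_one hD]; nlinarith
      rw [boolMin, if_pos ⟨h, hy⟩]
      set y := g / (g + (n+1) * (1-g)) with hyd
      have hden : 0 < g + y - g * y := by nlinarith
      have hD2 : (0:ℝ) < g + (n+1+1) * (1 - g) := by nlinarith
      push_cast
      rw [div_eq_div_iff hden.ne' hD2.ne']
      have hthis : y * (g + ((n:ℝ)+1) * (1-g)) = g := by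
        rw [hyd]; field_simp
      nlinarith [hthis]
    · rw [ih, if_neg h, if_neg h, boolMin, if_neg (by tauto)]

lemma nfold_ofReal (G : ℝ → ℝ) {s : ℝ} (h0 : 0 ≤ G s) (h1 : G s ≤ 1) (n : ℕ) :
    ENNReal.ofReal (nfold G (n+1) s) = (1 + ((n:ℝ≥0∞)+1) * psiE (G s))⁻¹ := by
  rw [nfold_apply G h1 n]
  rcases h0.lt_or_eq with h | h
  · rw [if_pos h, psiE_of_pos h]
    set g := G s with hg
    have hD : (0:ℝ) < g + (n+1) * (1 - g) := by nlinarith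
    have h1g : (0:ℝ) ≤ 1/g - 1 := by
      have : 1 ≤ 1/g := by rw [le_div_iff₀ h]; linarith
      linarith
    have e1 : ((n:ℝ≥0∞)+1) * ENNReal.ofReal (1/g - 1) = ENNReal.ofReal ((n+1) * (1/g-1)) := by
      rw [ENNReal.ofReal_mul (by positivity)]
      congr 1
      rw [ENNReal.ofReal_add (by positivity) zero_le_one]
      simp
    rw [e1, ← ENNReal.ofReal_one, ← ENNReal.ofReal_add zero_le_one (by positivity),
      ← ENNReal.ofReal_inv_of_pos (by positivity)]
    congr 1
    field_simp
  · rw [if_neg (by rw [← h]; simp), ← h, psiE_of_nonpos le_rfl]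
    rw [ENNReal.mul_top (by simp)]
    simp



def scaleRel (L : ℝ → ℝ≥0∞) (lam c : ℝ) : Prop :=
  0 < c ∧
  (∀ t u : ℝ, 0 < t → 0 < u → u < c * t → (ENNReal.ofReal lam)⁻¹ * L t ≤ L u) ∧
  (∀ t v : ℝ, 0 < t → c * t < v → L v ≤ (ENNReal.ofReal lam)⁻¹ * L t)

section Core

variable {K L : ℝ → ℝ≥0∞} {a : ℕ → ℝ} {t0 : ℝ}

lemma ceil_div_tendsto {lam : ℝ} (hlam : 0 < lam) :
    Tendsto (fun n : ℕ => (n : ℝ) / (⌈lam * n⌉₊ : ℝ)) atTop (𝓝 lam⁻¹) := by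
  have h1 : Tendsto (fun n : ℕ => (⌈lam * n⌉₊ : ℝ) / n) atTop (𝓝 lam) := by
    have hupper : Tendsto (fun n : ℕ => lam + 1/n) atTop (𝓝 lam) := by
      have : Tendsto (fun n : ℕ => 1/(n:ℝ)) atTop (𝓝 0) := by
        simpa using tendsto_one_div_atTop_nhds_zero_nat (𝕜 := ℝ)
      simpa using tendsto_const_nhds.add this
    apply tendsto_of_tendsto_of_tendsto_of_le_of_le' tendsto_const_nhds hupper
    · filter_upwards [eventually_ge_atTop 1] with n hn
      have hn' : (0:ℝ) < n := by exact_mod_cast hn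
      rw [le_div_iff₀ hn']
      exact Nat.le_ceil _
    · filter_upwards [eventually_ge_atTop 1] with n hn
      have hn' : (0:ℝ) < n := by exact_mod_cast hn
      rw [div_le_iff₀ hn']
      have h := Nat.ceil_lt_add_one (by positivity : (0:ℝ) ≤ lam * n)
      have he : (lam + 1/(n:ℝ)) * n = lam * n + 1 := by field_simp
      linarith
  have h2 := h1.inv₀ hlam.ne'
  refine h2.congr (fun n => ?_)
  rw [inv_div]

lemma ceil_tendsto_atTop {lam : ℝ} (hlam : 0 < lam) :
    Tendsto (fun n : ℕ => ⌈lam * n⌉₊) atTop atTop := by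
  apply tendsto_atTop.2
  intro b
  filter_upwards [eventually_ge_atTop ⌈(b:ℝ)/lam⌉₊] with n hn
  have h1 : (b:ℝ)/lam ≤ n := le_trans (Nat.le_ceil _) (by exact_mod_cast hn)
  have h2 : (b:ℝ) ≤ lam * n := by rw [div_le_iff₀ hlam] at h1; linarith
  calc b = ⌈(b:ℝ)⌉₊ := by simp
    _ ≤ ⌈lam * n⌉₊ := Nat.ceil_le_ceil h2

lemma scaled_limit
    (hconv : ∀ t : ℝ, 0 < t → Tendsto (fun n : ℕ => (n:ℝ≥0∞) * K (a n * t)) atTop (𝓝 (L t)))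
    {lam : ℝ} (hlam : 0 < lam) {t : ℝ} (ht : 0 < t) :
    Tendsto (fun n : ℕ => (n:ℝ≥0∞) * K (a (⌈lam * n⌉₊) * t)) atTop
      (𝓝 ((ENNReal.ofReal lam)⁻¹ * L t)) := by
  set m := fun n : ℕ => ⌈lam * n⌉₊ with hm
  have h1 : Tendsto (fun n : ℕ => (m n : ℝ≥0∞) * K (a (m n) * t)) atTop (𝓝 (L t)) :=
    (hconv t ht).comp (ceil_tendsto_atTop hlam)
  have h2 : Tendsto (fun n : ℕ => ENNReal.ofReal ((n:ℝ)/(m n))) atTop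
      (𝓝 (ENNReal.ofReal lam)⁻¹) := by
    have := (ENNReal.continuous_ofReal.tendsto _).comp (ceil_div_tendsto hlam)
    rwa [← ENNReal.ofReal_inv_of_pos hlam]
  have hne : (ENNReal.ofReal lam)⁻¹ ≠ 0 := by
    simp [ENNReal.inv_ne_zero]
  have hnetop : (ENNReal.ofReal lam)⁻¹ ≠ ∞ := by
    simp [ENNReal.inv_ne_top, ENNReal.ofReal_pos.2 hlam |>.ne']
  have h3 := ENNReal.Tendsto.mul h2 (Or.inl hne) h1 (Or.inr hnetop)
  apply h3.congr'
  have hm1 : ∀ᶠ n in atTop, 1 ≤ m n := (ceil_tendsto_atTop hlam).eventually_ge_atTop 1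
  filter_upwards [hm1] with n hn
  have hmn : (0:ℝ) < (m n : ℝ) := by exact_mod_cast hn
  rw [← mul_assoc]
  congr 1
  rw [← ENNReal.ofReal_natCast (m n), ← ENNReal.ofReal_mul (by positivity),
    div_mul_cancel₀ _ hmn.ne', ENNReal.ofReal_natCast]


lemma exists_scaleRel
    (ha : ∀ n, 0 < a n)
    (hK : ∀ u v : ℝ, 0 < u → u ≤ v → K v ≤ K u)
    (hconv : ∀ t : ℝ, 0 < t → Tendsto (fun n : ℕ => (n:ℝ≥0∞) * K (a n * t)) atTop (𝓝 (L t)))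
    (ht0 : 0 < t0) (hL0 : 0 < L t0)
    (hLtop : Tendsto L atTop (𝓝 0))
    {lam : ℝ} (hlam : 0 < lam) :
    ∃ c, scaleRel L lam c := by
  classical
  set m := fun n : ℕ => ⌈lam * n⌉₊ with hm
  set r := fun n : ℕ => a (m n) / a n with hr
  have hrpos : ∀ n, 0 < r n := fun n => div_pos (ha _) (ha _)
  have hinv_netop : (ENNReal.ofReal lam)⁻¹ ≠ ∞ := by
    simp [ENNReal.ofReal_pos.2 hlam |>.ne']
  have hinv_ne : (ENNReal.ofReal lam)⁻¹ ≠ 0 := by simp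
  have hL0ne : L t0 ≠ 0 := hL0.ne'
  -- upper bound on r
  have hup : ∃ R : ℝ, ∀ᶠ n in atTop, r n < R := by
    by_contra hcon
    push_neg at hcon
    obtain ⟨φ, hφmono, hφ⟩ := Filter.extraction_forall_of_frequently
      (fun i : ℕ => hcon (i:ℝ))
    have key : ∀ s : ℝ, 0 < s → (ENNReal.ofReal lam)⁻¹ * L t0 ≤ L s := by
      intro s hs
      have hA : Tendsto (fun k : ℕ => ((φ k : ℕ):ℝ≥0∞) * K (a (m (φ k)) * t0)) atTop
          (𝓝 ((ENNReal.ofReal lam)⁻¹ * L t0)) :=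
        (scaled_limit hconv hlam ht0).comp hφmono.tendsto_atTop
      have hB : Tendsto (fun k : ℕ => ((φ k : ℕ):ℝ≥0∞) * K (a (φ k) * s)) atTop (𝓝 (L s)) :=
        (hconv s hs).comp hφmono.tendsto_atTop
      apply le_of_tendsto_of_tendsto hA hB
      filter_upwards [eventually_ge_atTop ⌈s/t0⌉₊] with k hk
      have h1 : s/t0 ≤ (k:ℝ) := le_trans (Nat.le_ceil _) (by exact_mod_cast hk)
      have h2 : s/t0 ≤ r (φ k) := h1.trans (hφ k)
      have h3 : a (φ k) * s ≤ a (m (φ k)) * t0 := by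
        rw [div_le_div_iff₀ ht0 (ha (φ k))] at h2
        linarith [h2]
      exact mul_le_mul_right (hK _ _ (mul_pos (ha _) hs) h3) _
    have hfin : (ENNReal.ofReal lam)⁻¹ * L t0 ≤ 0 := by
      apply ge_of_tendsto hLtop
      filter_upwards [eventually_gt_atTop (0:ℝ)] with s hs using key s hs
    rcases mul_eq_zero.1 (le_antisymm hfin zero_le) with h | h
    · exact hinv_ne h
    · exact hL0ne h
  -- lower bound on r
  have hdown : ∃ ε : ℝ, 0 < ε ∧ ∀ᶠ n in atTop, ε < r n := by
    by_contra hcon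
    push_neg at hcon
    obtain ⟨φ, hφmono, hφ⟩ := Filter.extraction_forall_of_frequently
      (fun i : ℕ => hcon (1/((i:ℝ)+1)) (by positivity))
    have key : ∀ t : ℝ, 0 < t → L t0 ≤ (ENNReal.ofReal lam)⁻¹ * L t := by
      intro t ht
      have hA : Tendsto (fun k : ℕ => ((φ k : ℕ):ℝ≥0∞) * K (a (m (φ k)) * t)) atTop
          (𝓝 ((ENNReal.ofReal lam)⁻¹ * L t)) :=
        (scaled_limit hconv hlam ht).comp hφmono.tendsto_atTop
      have hB : Tendsto (fun k : ℕ => ((φ k : ℕ):ℝ≥0∞) * K (a (φ k) * t0)) atTop (𝓝 (L t0)) :=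
        (hconv t0 ht0).comp hφmono.tendsto_atTop
      apply le_of_tendsto_of_tendsto hB hA
      filter_upwards [eventually_ge_atTop ⌈t/t0⌉₊] with k hk
      have h1 : t/t0 ≤ (k:ℝ) := le_trans (Nat.le_ceil _) (by exact_mod_cast hk)
      have h2 : r (φ k) ≤ t0/t := by
        refine le_trans (hφ k) ?_
        rw [div_le_div_iff₀ (by positivity) ht]
        have ht0t : t/t0 * t0 = t := by field_simp
        nlinarith [ht0t, h1, ht0, ht]
      have h3 : a (m (φ k)) * t ≤ a (φ k) * t0 := by
        rw [div_le_div_iff₀ (ha (φ k)) ht] at h2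
        linarith [h2]
      exact mul_le_mul_right (hK _ _ (mul_pos (ha _) ht) h3) _
    have hzero : Tendsto (fun t => (ENNReal.ofReal lam)⁻¹ * L t) atTop (𝓝 0) := by
      have := ENNReal.Tendsto.const_mul (a := (ENNReal.ofReal lam)⁻¹) hLtop
        (Or.inr hinv_netop)
      simpa using this
    have hfin : L t0 ≤ 0 := by
      apply ge_of_tendsto hzero
      filter_upwards [eventually_gt_atTop (0:ℝ)] with t ht using key t ht
    exact hL0ne (le_antisymm hfin zero_le)
  obtain ⟨R, hR⟩ := hup
  obtain ⟨ε, hε, hεr⟩ := hdown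
  obtain ⟨n₀, hn₁, hn₂⟩ := (hεr.and hR).exists
  have hεR : ε < R := hn₁.trans hn₂
  set q := fun n => max ε (min (r n) R) with hq
  have hqmem : ∀ n, q n ∈ Icc ε R :=
    fun n => ⟨le_max_left _ _, max_le hεR.le ((min_le_right _ _))⟩
  obtain ⟨c, hc, φ, hφmono, hφtendsto⟩ :=
    tendsto_subseq_of_bounded (Metric.isBounded_Icc ε R) hqmem
  rw [IsClosed.closure_eq isClosed_Icc] at hc
  have hcpos : 0 < c := lt_of_lt_of_le hε hc.1
  have hrt : Tendsto (fun k => r (φ k)) atTop (𝓝 c) := by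
    apply hφtendsto.congr'
    filter_upwards [hφmono.tendsto_atTop.eventually (hεr.and hR)] with k hk
    show q (φ k) = r (φ k)
    rw [hq]
    simp only []
    rw [min_eq_left hk.2.le, max_eq_right hk.1.le]
  refine ⟨c, hcpos, ?_, ?_⟩
  · intro t u ht hu huc
    have hA : Tendsto (fun k : ℕ => ((φ k : ℕ):ℝ≥0∞) * K (a (m (φ k)) * t)) atTop
        (𝓝 ((ENNReal.ofReal lam)⁻¹ * L t)) :=
      (scaled_limit hconv hlam ht).comp hφmono.tendsto_atTop
    have hB : Tendsto (fun k : ℕ => ((φ k : ℕ):ℝ≥0∞) * K (a (φ k) * u)) atTop (𝓝 (L u)) :=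
      (hconv u hu).comp hφmono.tendsto_atTop
    apply le_of_tendsto_of_tendsto hA hB
    have hut : u / t < c := by rw [div_lt_iff₀ ht]; linarith [huc]
    filter_upwards [hrt.eventually_const_lt hut] with k hk
    have h3 : a (φ k) * u ≤ a (m (φ k)) * t := by
      rw [div_lt_div_iff₀ ht (ha (φ k))] at hk
      nlinarith [hk]
    exact mul_le_mul_right (hK _ _ (mul_pos (ha _) hu) h3) _
  · intro t v ht hvc
    have hv : 0 < v := lt_trans (by positivity) hvc
    have hA : Tendsto (fun k : ℕ => ((φ k : ℕ):ℝ≥0∞) * K (a (m (φ k)) * t)) atTop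
        (𝓝 ((ENNReal.ofReal lam)⁻¹ * L t)) :=
      (scaled_limit hconv hlam ht).comp hφmono.tendsto_atTop
    have hB : Tendsto (fun k : ℕ => ((φ k : ℕ):ℝ≥0∞) * K (a (φ k) * v)) atTop (𝓝 (L v)) :=
      (hconv v hv).comp hφmono.tendsto_atTop
    apply le_of_tendsto_of_tendsto hB hA
    have hvt : c < v / t := by rw [lt_div_iff₀ ht]; linarith [hvc]
    filter_upwards [hrt.eventually_lt_const hvt] with k hk
    have h3 : a (m (φ k)) * t ≤ a (φ k) * v := by
      rw [div_lt_div_iff₀ (ha (φ k)) ht] at hk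
      nlinarith [hk]
    exact mul_le_mul_right (hK _ _ (mul_pos (ha _) ht) h3) _


lemma scaleRel_one_one (hL : ∀ u v : ℝ, 0 < u → u ≤ v → L v ≤ L u) : scaleRel L 1 1 := by
  refine ⟨one_pos, ?_, ?_⟩
  · intro t u ht hu huc
    simpa using hL u t hu (by linarith)
  · intro t v ht hvc
    simpa using hL t v ht (by linarith)

lemma scaleRel_mul {lam mu c d : ℝ} (hlam : 0 < lam) (hmu : 0 < mu)
    (h1 : scaleRel L lam c) (h2 : scaleRel L mu d) : scaleRel L (lam * mu) (c * d) := by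
  obtain ⟨hc, hu1, hv1⟩ := h1
  obtain ⟨hd, hu2, hv2⟩ := h2
  have he : (ENNReal.ofReal (lam * mu))⁻¹ =
      (ENNReal.ofReal lam)⁻¹ * (ENNReal.ofReal mu)⁻¹ := by
    rw [ENNReal.ofReal_mul hlam.le,
      ENNReal.mul_inv (Or.inl (by simp [hlam])) (Or.inl (by simp))]
  refine ⟨mul_pos hc hd, ?_, ?_⟩
  · intro t u ht hu huc
    set w := (u + c * (d * t)) / 2 with hw
    have hcdt : u < c * (d * t) := by rw [mul_assoc] at huc; exact huc
    have hw1 : u < w := by rw [hw]; linarith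
    have hw2 : w < c * (d * t) := by rw [hw]; linarith
    have hwpos : 0 < w := lt_trans hu hw1
    have hu'pos : 0 < w / c := by positivity
    have hu'lt : w / c < d * t := by rw [div_lt_iff₀ hc]; linarith [hw2]
    have step1 : (ENNReal.ofReal mu)⁻¹ * L t ≤ L (w / c) := hu2 t (w/c) ht hu'pos hu'lt
    have step2 : (ENNReal.ofReal lam)⁻¹ * L (w / c) ≤ L u := by
      apply hu1 (w/c) u hu'pos hu
      rw [mul_div_cancel₀ _ hc.ne']
      exact hw1
    calc (ENNReal.ofReal (lam * mu))⁻¹ * L t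
        = (ENNReal.ofReal lam)⁻¹ * ((ENNReal.ofReal mu)⁻¹ * L t) := by rw [he, mul_assoc]
      _ ≤ (ENNReal.ofReal lam)⁻¹ * L (w / c) := mul_le_mul_right step1 _
      _ ≤ L u := step2
  · intro t v ht hvc
    set w := (c * (d * t) + v) / 2 with hw
    have hcdt : c * (d * t) < v := by rw [mul_assoc] at hvc; exact hvc
    have hw1 : c * (d * t) < w := by rw [hw]; linarith
    have hw2 : w < v := by rw [hw]; linarith
    have hdt : 0 < d * t := mul_pos hd ht
    have hwpos : 0 < w := lt_trans (by positivity) hw1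
    have hv'pos : 0 < w / c := by positivity
    have hv'gt : d * t < w / c := by rw [lt_div_iff₀ hc]; linarith [hw1]
    have step1 : L (w / c) ≤ (ENNReal.ofReal mu)⁻¹ * L t := hv2 t (w/c) ht hv'gt
    have step2 : L v ≤ (ENNReal.ofReal lam)⁻¹ * L (w / c) := by
      apply hv1 (w/c) v hv'pos
      rw [mul_div_cancel₀ _ hc.ne']
      exact hw2
    calc L v ≤ (ENNReal.ofReal lam)⁻¹ * L (w / c) := step2
      _ ≤ (ENNReal.ofReal lam)⁻¹ * ((ENNReal.ofReal mu)⁻¹ * L t) := mul_le_mul_right step1 _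
      _ = (ENNReal.ofReal (lam * mu))⁻¹ * L t := by rw [he, mul_assoc]

lemma scaleRel_pow (hL : ∀ u v : ℝ, 0 < u → u ≤ v → L v ≤ L u)
    {lam c : ℝ} (hlam : 0 < lam) (h : scaleRel L lam c) (k : ℕ) :
    scaleRel L (lam ^ k) (c ^ k) := by
  induction k with
  | zero => simpa using scaleRel_one_one hL
  | succ k ih =>
    rw [pow_succ, pow_succ]
    exact scaleRel_mul (by positivity) hlam ih h

lemma blowup (hex : ∀ lam : ℝ, 0 < lam → ∃ c, scaleRel L lam c)
    (ht0 : 0 < t0) (hL0 : 0 < L t0) (hL0' : L t0 < ∞) (M : ℝ≥0∞) (hM : M ≠ ∞) :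
    ∃ δ : ℝ, 0 < δ ∧ ∀ u, 0 < u → u < δ → M ≤ L u := by
  rcases eq_or_ne M 0 with rfl | hM0
  · exact ⟨1, one_pos, fun u _ _ => zero_le⟩
  have hMt : 0 < M.toReal := ENNReal.toReal_pos hM0 hM
  have hLt : 0 < (L t0).toReal := ENNReal.toReal_pos hL0.ne' hL0'.ne
  set lam := (L t0).toReal / (2 * M.toReal) with hlamdef
  have hlam : 0 < lam := by positivity
  obtain ⟨c, hc, hu, _⟩ := hex lam hlam
  refine ⟨c * t0, by positivity, fun u hupos huδ => ?_⟩
  refine le_trans ?_ (hu t0 u ht0 hupos huδ)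
  have he : (ENNReal.ofReal lam)⁻¹ * L t0 = ENNReal.ofReal (lam⁻¹ * (L t0).toReal) := by
    rw [ENNReal.ofReal_mul (by positivity), ENNReal.ofReal_inv_of_pos hlam,
      ENNReal.ofReal_toReal hL0'.ne]
  have harith : lam⁻¹ * (L t0).toReal = 2 * M.toReal := by
    rw [hlamdef]; field_simp
  rw [he, harith]
  have : ENNReal.ofReal (2 * M.toReal) = 2 * M := by
    rw [ENNReal.ofReal_mul (by norm_num), ENNReal.ofReal_toReal hM]
    norm_num
  rw [this, two_mul]
  exact le_add_self

lemma scaleRel_one_imp (hL : ∀ u v : ℝ, 0 < u → u ≤ v → L v ≤ L u)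
    (hex : ∀ lam : ℝ, 0 < lam → ∃ c, scaleRel L lam c)
    (ht0 : 0 < t0) (hL0 : 0 < L t0) (hL0' : L t0 < ∞)
    (hLtop : Tendsto L atTop (𝓝 0))
    {c : ℝ} (h : scaleRel L 1 c) : c = 1 := by
  have hc0 : 0 < c := h.1
  rcases lt_trichotomy c 1 with hlt | heq | hgt
  · exfalso
    obtain ⟨δ, hδ, hblow⟩ := blowup hex ht0 hL0 hL0' (L t0 + 1)
      (by simp [hL0'.ne])
    have hck : Tendsto (fun k : ℕ => c ^ k * t0) atTop (𝓝 0) := by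
      simpa using (tendsto_pow_atTop_nhds_zero_of_lt_one hc0.le hlt).mul_const t0
    obtain ⟨k, hk⟩ := (hck.eventually_lt_const hδ).exists
    have hpow : scaleRel L 1 (c ^ k) := by
      simpa using scaleRel_pow hL one_pos h k
    set v := (c ^ k * t0 + δ) / 2 with hv
    have hckpos : 0 < c ^ k * t0 := by positivity
    have hv1 : c ^ k * t0 < v := by rw [hv]; linarith
    have hv2 : v < δ := by rw [hv]; linarith
    have h1 : L v ≤ L t0 := by
      have := hpow.2.2 t0 v ht0 hv1
      simpa using this
    have h2 : L t0 + 1 ≤ L v := hblow v (by positivity) hv2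
    exact absurd (h2.trans h1) (ENNReal.lt_add_right hL0'.ne one_ne_zero).not_ge
  · exact heq
  · exfalso
    obtain ⟨s₁, hs₁⟩ := eventually_atTop.1 (hLtop.eventually_lt_const hL0)
    set u := max s₁ 1 with hudef
    have hupos : (0:ℝ) < u := lt_of_lt_of_le one_pos (le_max_right _ _)
    have hLu : L u < L t0 := hs₁ u (le_max_left _ _)
    have hck : Tendsto (fun k : ℕ => c ^ k * t0) atTop atTop :=
      (tendsto_pow_atTop_atTop_of_one_lt hgt).atTop_mul_const ht0
    obtain ⟨k, hk⟩ := (hck.eventually (eventually_gt_atTop u)).exists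
    have hpow : scaleRel L 1 (c ^ k) := by
      simpa using scaleRel_pow hL one_pos h k
    have h1 : L t0 ≤ L u := by
      have := hpow.2.1 t0 u ht0 hupos hk
      simpa using this
    exact absurd h1 hLu.not_ge

lemma scaleRel_unique (hL : ∀ u v : ℝ, 0 < u → u ≤ v → L v ≤ L u)
    (hex : ∀ lam : ℝ, 0 < lam → ∃ c, scaleRel L lam c)
    (ht0 : 0 < t0) (hL0 : 0 < L t0) (hL0' : L t0 < ∞)
    (hLtop : Tendsto L atTop (𝓝 0))
    {lam c c' : ℝ} (hlam : 0 < lam)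
    (h1 : scaleRel L lam c) (h2 : scaleRel L lam c') : c = c' := by
  obtain ⟨d, hd⟩ := hex lam⁻¹ (by positivity)
  have m1 := scaleRel_mul hlam (by positivity) h1 hd
  have m2 := scaleRel_mul hlam (by positivity) h2 hd
  rw [mul_inv_cancel₀ hlam.ne'] at m1 m2
  have e1 := scaleRel_one_imp hL hex ht0 hL0 hL0' hLtop m1
  have e2 := scaleRel_one_imp hL hex ht0 hL0 hL0' hLtop m2
  exact mul_right_cancel₀ hd.1.ne' (e1.trans e2.symm)

lemma scaleRel_mono (hL : ∀ u v : ℝ, 0 < u → u ≤ v → L v ≤ L u)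
    (hex : ∀ lam : ℝ, 0 < lam → ∃ c, scaleRel L lam c)
    (ht0 : 0 < t0) (hL0 : 0 < L t0) (hL0' : L t0 < ∞)
    (hLtop : Tendsto L atTop (𝓝 0))
    {lam mu c c' : ℝ} (hlam : 0 < lam) (hlm : lam ≤ mu)
    (h1 : scaleRel L lam c) (h2 : scaleRel L mu c') : c ≤ c' := by
  by_contra hcon
  push_neg at hcon
  have hc' : 0 < c' := h2.1
  set w := (c' + c) / 2 * t0 with hwdef
  have hw1 : c' * t0 < w := by rw [hwdef]; nlinarith
  have hw2 : w < c * t0 := by rw [hwdef]; nlinarith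
  have hwpos : 0 < w := lt_trans (by positivity) hw1
  have hA : (ENNReal.ofReal lam)⁻¹ * L t0 ≤ L w := h1.2.1 t0 w ht0 hwpos hw2
  have hB : L w ≤ (ENNReal.ofReal mu)⁻¹ * L t0 := h2.2.2 t0 w ht0 hw1
  have hAB := hA.trans hB
  rw [mul_comm ((ENNReal.ofReal lam)⁻¹) (L t0)] at hAB
  rw [mul_comm ((ENNReal.ofReal mu)⁻¹) (L t0)] at hAB
  have hinv : (ENNReal.ofReal lam)⁻¹ ≤ (ENNReal.ofReal mu)⁻¹ :=
    (ENNReal.mul_le_mul_iff_right hL0.ne' hL0'.ne).1 hAB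
  have hml : mu ≤ lam :=
    (ENNReal.ofReal_le_ofReal_iff hlam.le).1 (ENNReal.inv_le_inv.1 hinv)
  have heq : lam = mu := le_antisymm hlm hml
  subst heq
  exact hcon.ne (scaleRel_unique hL hex ht0 hL0 hL0' hLtop hlam h1 h2).symm

end Core

lemma addhom_monotone_linear (g : ℝ →+ ℝ) (hg : Monotone g) (x : ℝ) : g x = g 1 * x := by
  have hq : ∀ q : ℚ, g (q:ℝ) = g 1 * q := by
    intro q
    have h := map_ratCast_smul g ℝ ℝ q (1:ℝ)
    simpa [smul_eq_mul, mul_comm] using h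
  have hg1 : 0 ≤ g 1 := by
    have := hg (zero_le_one)
    simpa [map_zero] using this
  rcases hg1.lt_or_eq with hpos | hzero
  · by_contra hne
    rcases lt_or_gt_of_ne hne with hlt | hgt
    · -- g x < g 1 * x
      set d := g 1 * x - g x with hd
      have hdpos : 0 < d := by rw [hd]; linarith
      obtain ⟨q, hq1, hq2⟩ := exists_rat_btwn
        (show x - d / g 1 < x by
          have : 0 < d / g 1 := div_pos hdpos hpos
          linarith)
      have hmono : g (q:ℝ) ≤ g x := hg hq2.le
      rw [hq q] at hmono
      have hid : d / g 1 * g 1 = d := div_mul_cancel₀ _ hpos.ne'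
      nlinarith [hq1, hmono, hid, hpos]
    · set d := g x - g 1 * x with hd
      have hdpos : 0 < d := by rw [hd]; linarith
      obtain ⟨q, hq1, hq2⟩ := exists_rat_btwn
        (show x < x + d / g 1 by
          have : 0 < d / g 1 := div_pos hdpos hpos
          linarith)
      have hmono : g x ≤ g (q:ℝ) := hg hq1.le
      rw [hq q] at hmono
      have hid : d / g 1 * g 1 = d := div_mul_cancel₀ _ hpos.ne'
      nlinarith [hq2, hmono, hid, hpos]
  · -- g 1 = 0
    obtain ⟨q, hq1, _⟩ := exists_rat_btwn (show x < x + 1 by linarith)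
    obtain ⟨p, _, hp2⟩ := exists_rat_btwn (show x - 1 < x by linarith)
    have h1 : g x ≤ g (q:ℝ) := hg hq1.le
    have h2 : g (p:ℝ) ≤ g x := hg hp2.le
    rw [hq q, ← hzero] at h1
    rw [hq p, ← hzero] at h2
    simp at h1 h2
    rw [← hzero, zero_mul]
    linarith

theorem core_dagum {K L : ℝ → ℝ≥0∞} {a : ℕ → ℝ} {t0 : ℝ}
    (ha : ∀ n, 0 < a n)
    (hK : ∀ u v : ℝ, 0 < u → u ≤ v → K v ≤ K u)
    (hL : ∀ u v : ℝ, 0 < u → u ≤ v → L v ≤ L u)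
    (hconv : ∀ t : ℝ, 0 < t → Tendsto (fun n : ℕ => (n:ℝ≥0∞) * K (a n * t)) atTop (𝓝 (L t)))
    (ht0 : 0 < t0) (hL0 : 0 < L t0) (hL0' : L t0 < ∞)
    (hLtop : Tendsto L atTop (𝓝 0))
    (hLrc : Tendsto L (𝓝[>] t0) (𝓝 (L t0))) :
    ∃ lam α : ℝ, 0 < lam ∧ 0 < α ∧
      ∀ t : ℝ, 0 < t → L t = ENNReal.ofReal (lam * t ^ (-α)) := by
  have hex : ∀ lam : ℝ, 0 < lam → ∃ c, scaleRel L lam c :=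
    fun lam hlam => exists_scaleRel ha hK hconv ht0 hL0 hLtop hlam
  have hex' : ∀ lam : ℝ, ∃ c, 0 < lam → scaleRel L lam c := by
    intro lam
    by_cases h : 0 < lam
    · obtain ⟨c, hc⟩ := hex lam h; exact ⟨c, fun _ => hc⟩
    · exact ⟨1, fun h' => absurd h' h⟩
  choose f hf using hex'
  have hfpos : ∀ lam : ℝ, 0 < lam → 0 < f lam := fun lam h => (hf lam h).1
  have hfmul : ∀ lam mu : ℝ, 0 < lam → 0 < mu → f (lam * mu) = f lam * f mu := by
    intro lam mu h1 h2
    exact scaleRel_unique hL hex ht0 hL0 hL0' hLtop (mul_pos h1 h2)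
      (hf _ (mul_pos h1 h2)) (scaleRel_mul h1 h2 (hf _ h1) (hf _ h2))
  have hfmono : ∀ lam mu : ℝ, 0 < lam → lam ≤ mu → f lam ≤ f mu := by
    intro lam mu h1 h2
    exact scaleRel_mono hL hex ht0 hL0 hL0' hLtop h1 h2 (hf _ h1) (hf _ (h1.trans_le h2))
  set g : ℝ →+ ℝ := AddMonoidHom.mk' (fun x => Real.log (f (Real.exp x))) (by
    intro x y
    show Real.log (f (Real.exp (x + y))) = Real.log (f (Real.exp x)) + Real.log (f (Real.exp y))
    rw [Real.exp_add, hfmul _ _ (Real.exp_pos x) (Real.exp_pos y),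
      Real.log_mul (hfpos _ (Real.exp_pos x)).ne' (hfpos _ (Real.exp_pos y)).ne']) with hgdef
  have hgmono : Monotone g := by
    intro x y hxy
    exact Real.log_le_log (hfpos _ (Real.exp_pos x))
      (hfmono _ _ (Real.exp_pos x) (Real.exp_le_exp.2 hxy))
  set β := g 1 with hβdef
  have hglin : ∀ x, g x = β * x := addhom_monotone_linear g hgmono
  have hβ0 : 0 ≤ β := by
    have h := hgmono (zero_le_one : (0:ℝ) ≤ 1)
    rw [map_zero] at h
    exact h
  have hfval : ∀ lam : ℝ, 0 < lam → f lam = lam ^ β := by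
    intro lam h
    have h1 : g (Real.log lam) = Real.log (f lam) := by
      rw [hgdef]
      show Real.log (f (Real.exp (Real.log lam))) = _
      rw [Real.exp_log h]
    have h2 : Real.log (f lam) = β * Real.log lam := by rw [← h1, hglin]
    have h3 : f lam = Real.exp (β * Real.log lam) := by
      rw [← h2, Real.exp_log (hfpos _ h)]
    rw [h3, Real.rpow_def_of_pos h, mul_comm]
  have hLt : 0 < (L t0).toReal := ENNReal.toReal_pos hL0.ne' hL0'.ne
  have hβpos : 0 < β := by
    rcases hβ0.lt_or_eq with h | h
    · exact h
    · exfalso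
      have hone : ∀ lam : ℝ, 0 < lam → scaleRel L lam 1 := by
        intro lam hl
        have hsc := hf lam hl
        rwa [hfval lam hl, ← h, Real.rpow_zero] at hsc
      have hzero : ∀ v : ℝ, t0 < v → L v = 0 := by
        intro v hv
        have hle : ∀ k : ℕ, L v ≤ (ENNReal.ofReal ((k:ℝ)+1))⁻¹ * L t0 := by
          intro k
          have hck := (hone ((k:ℝ)+1) (by positivity)).2.2 t0 v ht0 (by linarith [hv])
          simpa using hck
        have htends : Tendsto (fun k : ℕ => (ENNReal.ofReal ((k:ℝ)+1))⁻¹ * L t0)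
            atTop (𝓝 0) := by
          have h1 : Tendsto (fun k : ℕ => ENNReal.ofReal (1/((k:ℝ)+1))) atTop (𝓝 0) := by
            have h2 : Tendsto (fun k : ℕ => 1/((k:ℝ)+1)) atTop (𝓝 0) :=
              tendsto_one_div_add_atTop_nhds_zero_nat
            simpa [Function.comp_def] using (ENNReal.continuous_ofReal.tendsto 0).comp h2
          have h3 : (fun k : ℕ => ENNReal.ofReal (1/((k:ℝ)+1)))
              = fun k : ℕ => (ENNReal.ofReal ((k:ℝ)+1))⁻¹ := by
            funext k
            rw [one_div, ENNReal.ofReal_inv_of_pos (by positivity)]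
          rw [h3] at h1
          have h4 := ENNReal.Tendsto.mul_const h1 (Or.inr hL0'.ne)
          simpa using h4
        exact le_antisymm (ge_of_tendsto htends (Eventually.of_forall hle)) zero_le
      have hzt : Tendsto L (𝓝[>] t0) (𝓝 (0:ℝ≥0∞)) := by
        apply Tendsto.congr' _ tendsto_const_nhds
        filter_upwards [self_mem_nhdsWithin] with v hv
        exact (hzero v hv).symm
      exact hL0.ne' (tendsto_nhds_unique hLrc hzt)
  refine ⟨(L t0).toReal * t0 ^ β⁻¹, β⁻¹, by positivity, by positivity, ?_⟩
  set α := β⁻¹ with hαdef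
  set lam0 := (L t0).toReal * t0 ^ α with hlam0def
  set A : ℝ → ℝ≥0∞ := fun s => ENNReal.ofReal (lam0 * s ^ (-α)) with hAdef
  have key : ∀ s : ℝ, 0 < s →
      (∀ u, 0 < u → u < s → A s ≤ L u) ∧ (∀ v, s < v → L v ≤ A s) := by
    intro s hs
    set lam := (s/t0) ^ α with hlamdef
    have hst0 : 0 < s / t0 := by positivity
    have hlam : 0 < lam := Real.rpow_pos_of_pos hst0 _
    have hsc : scaleRel L lam (s/t0) := by
      have hsc0 := hf lam hlam
      have hxx : ((s/t0) ^ α) ^ β = s/t0 := by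
        rw [← Real.rpow_mul hst0.le, hαdef, inv_mul_cancel₀ hβpos.ne', Real.rpow_one]
      rwa [hfval lam hlam, hlamdef, hxx] at hsc0
    have hval : (ENNReal.ofReal lam)⁻¹ * L t0 = A s := by
      have hLeq : L t0 = ENNReal.ofReal ((L t0).toReal) := (ENNReal.ofReal_toReal hL0'.ne).symm
      rw [← ENNReal.ofReal_inv_of_pos hlam, hLeq, ← ENNReal.ofReal_mul (by positivity)]
      congr 1
      rw [hlamdef, ← Real.rpow_neg hst0.le, Real.div_rpow hs.le ht0.le,
        Real.rpow_neg ht0.le, hlam0def]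
      field_simp
    have hmul : s / t0 * t0 = s := div_mul_cancel₀ _ ht0.ne'
    constructor
    · intro u hu hus
      have h := hsc.2.1 t0 u ht0 hu (by rw [hmul]; exact hus)
      rwa [hval] at h
    · intro v hv
      have h := hsc.2.2 t0 v ht0 (by rw [hmul]; exact hv)
      rwa [hval] at h
  intro t ht
  have hAcont : ContinuousAt A t := by
    apply ENNReal.continuous_ofReal.continuousAt.comp
    exact (Real.continuousAt_rpow_const t (-α) (Or.inl ht.ne')).const_mul lam0
  have h1 : L t ≤ A t := by
    apply ge_of_tendsto (hAcont.continuousWithinAt.tendsto : Tendsto A (𝓝[<] t) (𝓝 (A t)))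
    filter_upwards [Ioo_mem_nhdsLT ht] with u hu
    exact (key u hu.1).2 t hu.2
  have h2 : A t ≤ L t := by
    apply le_of_tendsto (hAcont.continuousWithinAt.tendsto : Tendsto A (𝓝[>] t) (𝓝 (A t)))
    filter_upwards [self_mem_nhdsWithin] with v hv
    exact (key v (ht.trans hv)).1 t ht hv
  exact le_antisymm h1 h2

lemma tendsto_psiE {α' : Type*} {f : α' → ℝ} {l : Filter α'} {c : ℝ}
    (h : Tendsto f l (𝓝 c)) :
    Tendsto (fun x => psiE (f x)) l (𝓝 (psiE c)) := by
  have h1 := (ENNReal.continuous_ofReal.tendsto c).comp h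
  have h2 := h1.inv
  exact ENNReal.Tendsto.sub h2 tendsto_const_nhds (Or.inr (by simp))

lemma tendsto_psi_of_tendsto_nfold {G : ℝ → ℝ} {x : ℕ → ℝ} {FT : ℝ}
    (hG01 : ∀ n : ℕ, 0 ≤ G (x n) ∧ G (x n) ≤ 1)
    (hconv : Tendsto (fun n => nfold G n (x n)) atTop (𝓝 FT)) :
    Tendsto (fun n : ℕ => (n : ℝ≥0∞) * psiE (G (x n))) atTop (𝓝 (psiE FT)) := by
  have h1 : Tendsto (fun n => ENNReal.ofReal (nfold G n (x n))) atTop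
      (𝓝 (ENNReal.ofReal FT)) := (ENNReal.continuous_ofReal.tendsto FT).comp hconv
  have h2 : (fun n : ℕ => ENNReal.ofReal (nfold G n (x n)))
      =ᶠ[atTop] fun n : ℕ => (1 + (n:ℝ≥0∞) * psiE (G (x n)))⁻¹ := by
    filter_upwards [eventually_ge_atTop 1] with n hn
    obtain ⟨m, rfl⟩ := Nat.exists_eq_add_of_le' hn
    rw [nfold_ofReal G (hG01 _).1 (hG01 _).2 m]
    push_cast
    ring_nf
  have h3 := h1.congr' h2
  have h4 := h3.inv
  simp only [inv_inv] at h4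
  have h5 := ENNReal.Tendsto.sub h4 (tendsto_const_nhds (x := (1:ℝ≥0∞)))
    (Or.inr (by simp))
  have h6 : (fun n : ℕ => (1 + (n:ℝ≥0∞) * psiE (G (x n))) - 1)
      = fun n : ℕ => (n:ℝ≥0∞) * psiE (G (x n)) := by
    funext n
    exact ENNReal.add_sub_cancel_left (by simp)
  rw [h6] at h5
  exact h5


/-- A distribution function on `[0,∞)` is Boolean max-stable (a nondegenerate limit of
rescaled `n`-fold Boolean max-convolutions) iff it is a Dagum law. -/
theorem boolean_max_stable_iff_dagum (F : ℝ → ℝ) (hF : IsDistFun F)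
    (hnondeg : ∃ t : ℝ, 0 < t ∧ 0 < F t ∧ F t < 1) :
    (∃ G : ℝ → ℝ, IsDistFun G ∧ ∃ a : ℕ → ℝ, (∀ n, 0 < a n) ∧
        ∀ t : ℝ, 0 < t →
          Tendsto (fun n => nfold G n (a n * t)) atTop (nhds (F t))) ↔
    (∃ lam α : ℝ, 0 < lam ∧ 0 < α ∧
        ∀ t : ℝ, 0 < t → F t = (1 + lam * t ^ (-α))⁻¹) := by
  obtain ⟨hFmono, hFrc, hFtop, hFbd⟩ := hF
  constructor
  · rintro ⟨G, hG, a, ha, hconv⟩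
    obtain ⟨hGmono, hGrc, hGtop, hGbd⟩ := hG
    obtain ⟨t0, ht0, hF0, hF1⟩ := hnondeg
    have hKanti : ∀ u v : ℝ, 0 < u → u ≤ v → psiE (G v) ≤ psiE (G u) := by
      intro u v hu huv
      exact psiE_antitone (hGmono (le_of_lt hu) ((le_of_lt hu).trans huv) huv)
    have hLanti : ∀ u v : ℝ, 0 < u → u ≤ v → psiE (F v) ≤ psiE (F u) := by
      intro u v hu huv
      exact psiE_antitone (hFmono (le_of_lt hu) ((le_of_lt hu).trans huv) huv)
    have hconv' : ∀ t : ℝ, 0 < t →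
        Tendsto (fun n : ℕ => (n:ℝ≥0∞) * psiE (G (a n * t))) atTop
          (𝓝 (psiE (F t))) := by
      intro t ht
      apply tendsto_psi_of_tendsto_nfold
      · intro n
        have hmem := hGbd (a n * t) (le_of_lt (mul_pos (ha n) ht))
        exact ⟨hmem.1, hmem.2⟩
      · exact hconv t ht
    have hL0 : 0 < psiE (F t0) := psiE_pos hF1
    have hL0' : psiE (F t0) < ∞ := psiE_lt_top hF0
    have hLtop : Tendsto (fun t => psiE (F t)) atTop (𝓝 0) := by
      have h := tendsto_psiE hFtop
      rwa [psiE_one] at h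
    have hLrc : Tendsto (fun t => psiE (F t)) (𝓝[>] t0) (𝓝 (psiE (F t0))) := by
      apply tendsto_psiE
      exact (hFrc t0 (le_of_lt ht0)).tendsto.mono_left
        (nhdsWithin_mono _ Ioi_subset_Ici_self)
    obtain ⟨lam, α, hlam, hα, hform⟩ :=
      core_dagum ha hKanti hLanti hconv' ht0 hL0 hL0' hLtop hLrc
    refine ⟨lam, α, hlam, hα, ?_⟩
    intro t ht
    have hpsi := hform t ht
    have hFt0 : 0 < F t := by
      by_contra hc
      push_neg at hc
      rw [psiE_of_nonpos hc] at hpsi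
      exact ENNReal.ofReal_ne_top hpsi.symm
    have hFt1 : F t ≤ 1 := (hFbd t (le_of_lt ht)).2
    rw [psiE_of_pos hFt0] at hpsi
    have h1f : (0:ℝ) ≤ 1/(F t) - 1 := by
      have : 1 ≤ 1/(F t) := by rw [le_div_iff₀ hFt0]; linarith
      linarith
    have heq : 1/(F t) - 1 = lam * t^(-α) :=
      (ENNReal.ofReal_eq_ofReal_iff h1f (by positivity)).1 hpsi
    rw [← heq]
    have h2 : 1 + (1/(F t) - 1) = 1/(F t) := by ring
    rw [h2, one_div, inv_inv]
  · rintro ⟨lam, α, hlam, hα, hform⟩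
    refine ⟨F, ⟨hFmono, hFrc, hFtop, hFbd⟩, fun n => ((n:ℝ)+1) ^ α⁻¹,
      fun n => Real.rpow_pos_of_pos (by positivity) _, ?_⟩
    intro t ht
    set c := lam * t ^ (-α) with hcdef
    have hcpos : 0 < c := by rw [hcdef]; positivity
    have hFform : ∀ n : ℕ, F (((n:ℝ)+1) ^ α⁻¹ * t) = (1 + c/((n:ℝ)+1))⁻¹ := by
      intro n
      have hn1 : (0:ℝ) < (n:ℝ)+1 := by positivity
      have hb : (0:ℝ) < ((n:ℝ)+1) ^ α⁻¹ := Real.rpow_pos_of_pos hn1 _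
      have hs : 0 < ((n:ℝ)+1) ^ α⁻¹ * t := mul_pos hb ht
      rw [hform _ hs]
      have hpow : ((((n:ℝ)+1) ^ α⁻¹) * t) ^ (-α) = t ^ (-α) / ((n:ℝ)+1) := by
        rw [Real.mul_rpow hb.le ht.le, ← Real.rpow_mul hn1.le]
        have hexp : α⁻¹ * (-α) = -1 := by field_simp
        rw [hexp, Real.rpow_neg_one]
        ring
      rw [hpow, hcdef]
      congr 1
      ring
    have hlim : Tendsto (fun n : ℕ => (1 + (n:ℝ)/((n:ℝ)+1) * c)⁻¹) atTop
        (𝓝 ((1+c)⁻¹)) := by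
      have h1 : Tendsto (fun n : ℕ => (n:ℝ)/((n:ℝ)+1)) atTop (𝓝 1) := by
        have h2 : Tendsto (fun n : ℕ => 1/((n:ℝ)+1)) atTop (𝓝 0) :=
          tendsto_one_div_add_atTop_nhds_zero_nat
        have h3 : (fun n : ℕ => (n:ℝ)/((n:ℝ)+1)) = fun n : ℕ => 1 - 1/((n:ℝ)+1) := by
          funext n; field_simp; ring
        rw [h3]
        simpa using tendsto_const_nhds.sub h2
      have h4 : Tendsto (fun n : ℕ => 1 + (n:ℝ)/((n:ℝ)+1) * c) atTop (𝓝 (1+c)) := by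
        simpa using tendsto_const_nhds.add (h1.mul_const c)
      exact h4.inv₀ (by positivity)
    rw [hform t ht]
    apply hlim.congr'
    filter_upwards [eventually_ge_atTop 1] with n hn
    obtain ⟨m, rfl⟩ := Nat.exists_eq_add_of_le' hn
    have hFs := hFform (m+1)
    push_cast at hFs
    have hD : (0:ℝ) < (m:ℝ)+1+1 := by positivity
    have hg1 : (0:ℝ) < 1 + c/((m:ℝ)+1+1) := by positivity
    have hle : F ((((m+1:ℕ):ℝ)+1) ^ α⁻¹ * t) ≤ 1 := by
      have hb : (0:ℝ) < (((m+1:ℕ):ℝ)+1) ^ α⁻¹ := Real.rpow_pos_of_pos (by positivity) _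
      exact (hFbd _ (le_of_lt (mul_pos hb ht))).2
    show (1 + ((m+1:ℕ):ℝ)/(((m+1:ℕ):ℝ)+1) * c)⁻¹ = nfold F (m+1) (((((m+1:ℕ)):ℝ)+1) ^ α⁻¹ * t)
    rw [nfold_apply F hle m]
    push_cast
    rw [hFs]
    rw [if_pos (by positivity)]
    have hgpos : (0:ℝ) < (1 + c/((m:ℝ)+1+1))⁻¹ := by positivity
    have hgle : (1 + c/((m:ℝ)+1+1))⁻¹ ≤ 1 := by
      rw [inv_le_one₀ hg1]
      have : 0 ≤ c/((m:ℝ)+1+1) := by positivity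
      linarith
    have hden : (0:ℝ) < (1 + c / ((m:ℝ) + 1 + 1))⁻¹
        + ((m:ℝ) + 1) * (1 - (1 + c / ((m:ℝ) + 1 + 1))⁻¹) := by nlinarith
    have hnum : (0:ℝ) < 1 + ((m:ℝ) + 1) / ((m:ℝ) + 1 + 1) * c := by positivity
    rw [eq_div_iff hden.ne']
    simp only [inv_eq_one_div]
    field_simp
    ring
end
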